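/- arXiv:2307.14186 — 4 statements merged into one kernel-verified Lean document; each statement's English description precedes it below -/
import Mathlib

section
/- Given a finite simple graph G = (V, E) with edge weights ω : E → ℚ≥0 and an integer k ≥ 1, construct a pilot-assignment instance with user set U = V, τ = k pilots, one dedicated AP per user (A(i) = {i}), and large-scale coefficients β_{ii} = 1, β_{im} = √(ω(i,m)/2) for adjacent m ≤ |V| with m ≠ i, and 0 otherwise. Then for every partition of V into k parts (equivalently, every feasible pilot assignment with the corresponding pilot classes), the pilot-assignment objective Σ_t Σ_{k,k' ∈ V_t, k ≠ k'} (Σ_{m ∈ A(k)} (β_{k'm}/β_{km})² + Σ_{m' ∈ A(k')} (β_{km'}/β_{k'm'})²) equals Σ_t Σ_{i,j ∈ V_t, i ≠ j over unordered pairs} ω(i,j), the Min-k-Partition objective value of the same partition. -/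
open Finset

/-- In the reduction from Min-k-Partition to Pilot Assignment (one dedicated AP
per user, `β i i = 1`, `β i m = √(ω i m / 2)` for adjacent `m ≠ i`, `0`
otherwise), for every assignment of the vertices to `k` parts the
pilot-assignment objective equals the Min-k-Partition objective. -/
theorem stmt_3 (V : Type*) [Fintype V] [LinearOrder V]
    (G : SimpleGraph V) [DecidableRel G.Adj]
    (ω : V → V → ℚ) (hω0 : ∀ i j, 0 ≤ ω i j) (hωsymm : ∀ i j, ω i j = ω j i)
    (hωsupp : ∀ i j, ¬ G.Adj i j → ω i j = 0)
    (k : ℕ) (hk : 1 ≤ k) (f : V → Fin k) :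
    (let β : V → V → ℝ := fun i m =>
      if m = i then 1 else if G.Adj i m then Real.sqrt ((ω i m : ℝ) / 2) else 0
    ∑ p ∈ (univ : Finset (V × V)).filter (fun p => p.1 < p.2 ∧ f p.1 = f p.2),
      ((β p.2 p.1 / β p.1 p.1) ^ 2 + (β p.1 p.2 / β p.2 p.2) ^ 2)) =
    ∑ p ∈ (univ : Finset (V × V)).filter (fun p => p.1 < p.2 ∧ f p.1 = f p.2),
      ((ω p.1 p.2 : ℝ)) := by
  refine Finset.sum_congr rfl ?_
  intro p hp
  simp only [mem_filter] at hp
  obtain ⟨-, hlt, -⟩ := hp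
  have hne : p.1 ≠ p.2 := ne_of_lt hlt
  have hsq : ∀ i j : V, G.Adj i j → (Real.sqrt ((ω i j : ℝ) / 2)) ^ 2 = (ω i j : ℝ) / 2 := by
    intro i j _
    have h0 : (0:ℝ) ≤ (ω i j : ℝ) := by exact_mod_cast hω0 i j
    exact Real.sq_sqrt (by positivity)
  simp only [if_neg hne, if_neg hne.symm, if_pos rfl, ite_true, div_one]
  by_cases h : G.Adj p.1 p.2
  · rw [if_pos h, if_pos h.symm, hsq _ _ h, hsq _ _ h.symm, hωsymm p.2 p.1]
    push_cast
    ring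
  · rw [if_neg h, if_neg (fun h' => h h'.symm), hωsupp _ _ h]
    norm_num
end

section
/- With the construction of the previous statement (Min-k-Partition instance mapped to a pilot-assignment instance with one dedicated AP per user and β_{im} = √(ω(i,m)/2)), a partition of V into k nonempty parts is optimal for Min-k-Partition if and only if the corresponding feasible pilot assignment is optimal for the pilot-assignment instance. Hence Min-k-Partition reduces to Pilot Assignment preserving optimal values. -/
open Finset

/-- With the reduction construction, a partition of `V` into `k` nonempty parts
(equivalently, a surjective assignment `f : V → Fin k`) is optimal for
Min-k-Partition iff the corresponding feasible pilot assignment is optimal for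
the constructed Pilot Assignment instance. -/
theorem stmt_4 (V : Type*) [Fintype V] [LinearOrder V]
    (G : SimpleGraph V) [DecidableRel G.Adj]
    (ω : V → V → ℚ) (hω0 : ∀ i j, 0 ≤ ω i j) (hωsymm : ∀ i j, ω i j = ω j i)
    (hωsupp : ∀ i j, ¬ G.Adj i j → ω i j = 0)
    (k : ℕ) (hk : 1 ≤ k) (f : V → Fin k) (hf : Function.Surjective f) :
    letI β : V → V → ℝ := fun i m =>
      if m = i then 1 else if G.Adj i m then Real.sqrt ((ω i m : ℝ) / 2) else 0
    letI mPA : (V → Fin k) → ℝ := fun g =>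
      ∑ p ∈ (univ : Finset (V × V)).filter (fun p => p.1 < p.2 ∧ g p.1 = g p.2),
        ((β p.2 p.1 / β p.1 p.1) ^ 2 + (β p.1 p.2 / β p.2 p.2) ^ 2)
    letI mMkP : (V → Fin k) → ℝ := fun g =>
      ∑ p ∈ (univ : Finset (V × V)).filter (fun p => p.1 < p.2 ∧ g p.1 = g p.2),
        ((ω p.1 p.2 : ℝ))
    ((∀ g : V → Fin k, Function.Surjective g → mMkP f ≤ mMkP g) ↔
     (∀ g : V → Fin k, Function.Surjective g → mPA f ≤ mPA g)) := by
  beta_reduce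
  have key : ∀ g : V → Fin k,
      (∑ p ∈ (univ : Finset (V × V)).filter (fun p => p.1 < p.2 ∧ g p.1 = g p.2),
        (((if p.1 = p.2 then (1:ℝ) else if G.Adj p.2 p.1 then Real.sqrt ((ω p.2 p.1 : ℝ) / 2) else 0) /
            (if p.1 = p.1 then (1:ℝ) else if G.Adj p.1 p.1 then Real.sqrt ((ω p.1 p.1 : ℝ) / 2) else 0)) ^ 2 +
         ((if p.2 = p.1 then (1:ℝ) else if G.Adj p.1 p.2 then Real.sqrt ((ω p.1 p.2 : ℝ) / 2) else 0) /
            (if p.2 = p.2 then (1:ℝ) else if G.Adj p.2 p.2 then Real.sqrt ((ω p.2 p.2 : ℝ) / 2) else 0)) ^ 2)) =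
      ∑ p ∈ (univ : Finset (V × V)).filter (fun p => p.1 < p.2 ∧ g p.1 = g p.2), ((ω p.1 p.2 : ℝ)) := by
    intro g
    refine Finset.sum_congr rfl ?_
    intro p hp
    simp only [Finset.mem_filter] at hp
    have hne : p.1 ≠ p.2 := ne_of_lt hp.2.1
    rw [if_pos rfl, if_pos rfl, div_one, div_one, if_neg hne, if_neg hne.symm]
    by_cases hadj : G.Adj p.1 p.2
    · have hadj' : G.Adj p.2 p.1 := hadj.symm
      rw [if_pos hadj', if_pos hadj, Real.sq_sqrt, Real.sq_sqrt, hωsymm]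
      · push_cast; ring
      · exact div_nonneg (by exact_mod_cast hω0 _ _) (by norm_num)
      · exact div_nonneg (by exact_mod_cast hω0 _ _) (by norm_num)
    · have hadj' : ¬ G.Adj p.2 p.1 := fun h => hadj h.symm
      rw [if_neg hadj', if_neg hadj, hωsupp _ _ hadj]
      norm_num
  constructor
  · intro h g hg; rw [key, key]; exact h g hg
  · intro h g hg; rw [← key, ← key]; exact h g hg
end

section
/- In the reduction from Min-k-Partition to Pilot Assignment, if h is any feasible pilot assignment solving the constructed instance, and 𝒱 = {V_1,...,V_k} with V_t = {i : h(i) = t} is the induced partition, then the measure (objective value) of 𝒱 in Min-k-Partition equals the measure of h in Pilot Assignment; in particular the performance ratio of 𝒱 with respect to the Min-k-Partition instance equals the performance ratio of h with respect to the Pilot Assignment instance. Hence the reduction is approximation-preserving with α = 1. -/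
open Finset

/-- In the reduction from Min-k-Partition to Pilot Assignment, any feasible
pilot assignment `h` and its induced partition have equal measures, and
(assuming the optimal values and the measure of `h` are positive) equal
performance ratios; hence the reduction is an AP-reduction with `α = 1`. -/
theorem stmt_10 (V : Type*) [Fintype V] [LinearOrder V]
    (G : SimpleGraph V) [DecidableRel G.Adj]
    (ω : V → V → ℚ) (hω0 : ∀ i j, 0 ≤ ω i j) (hωsymm : ∀ i j, ω i j = ω j i)
    (hωsupp : ∀ i j, ¬ G.Adj i j → ω i j = 0)
    (k : ℕ) (hk : 1 ≤ k) (h : V → Fin k) (hsurj : Function.Surjective h) :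
    letI β : V → V → ℝ := fun i m =>
      if m = i then 1 else if G.Adj i m then Real.sqrt ((ω i m : ℝ) / 2) else 0
    letI mPA : (V → Fin k) → ℝ := fun g =>
      ∑ p ∈ (univ : Finset (V × V)).filter (fun p => p.1 < p.2 ∧ g p.1 = g p.2),
        ((β p.2 p.1 / β p.1 p.1) ^ 2 + (β p.1 p.2 / β p.2 p.2) ^ 2)
    letI mMkP : (V → Fin k) → ℝ := fun g =>
      ∑ p ∈ (univ : Finset (V × V)).filter (fun p => p.1 < p.2 ∧ g p.1 = g p.2),
        ((ω p.1 p.2 : ℝ))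
    letI optPA : ℝ :=
      sInf {x : ℝ | ∃ g : V → Fin k, Function.Surjective g ∧ x = mPA g}
    letI optMkP : ℝ :=
      sInf {x : ℝ | ∃ g : V → Fin k, Function.Surjective g ∧ x = mMkP g}
    mMkP h = mPA h ∧
    (0 < optMkP → 0 < optPA → 0 < mMkP h →
      max (mMkP h / optMkP) (optMkP / mMkP h) =
        max (mPA h / optPA) (optPA / mPA h)) := by
  have key : ∀ g : V → Fin k,
      (∑ p ∈ (univ : Finset (V × V)).filter (fun p => p.1 < p.2 ∧ g p.1 = g p.2),
        ((ω p.1 p.2 : ℝ))) =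
      ∑ p ∈ (univ : Finset (V × V)).filter (fun p => p.1 < p.2 ∧ g p.1 = g p.2),
        (((if p.1 = p.2 then (1:ℝ) else if G.Adj p.2 p.1 then Real.sqrt ((ω p.2 p.1 : ℝ)/2) else 0) /
           (if p.1 = p.1 then (1:ℝ) else if G.Adj p.1 p.1 then Real.sqrt ((ω p.1 p.1 : ℝ)/2) else 0))^2 +
         ((if p.2 = p.1 then (1:ℝ) else if G.Adj p.1 p.2 then Real.sqrt ((ω p.1 p.2 : ℝ)/2) else 0) /
           (if p.2 = p.2 then (1:ℝ) else if G.Adj p.2 p.2 then Real.sqrt ((ω p.2 p.2 : ℝ)/2) else 0))^2) := by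
    intro g
    refine Finset.sum_congr rfl fun p hp => ?_
    simp only [Finset.mem_filter] at hp
    have hne : p.1 ≠ p.2 := ne_of_lt hp.2.1
    have hne' : p.2 ≠ p.1 := hne.symm
    rw [if_pos rfl, if_pos rfl, div_one, div_one, if_neg hne, if_neg hne']
    by_cases hadj : G.Adj p.1 p.2
    · have hadj' : G.Adj p.2 p.1 := hadj.symm
      rw [if_pos hadj, if_pos hadj', Real.sq_sqrt, Real.sq_sqrt]
      · rw [hωsymm p.2 p.1]; ring
      · have : (0:ℝ) ≤ (ω p.1 p.2 : ℝ) := by exact_mod_cast hω0 p.1 p.2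
        linarith
      · have : (0:ℝ) ≤ (ω p.2 p.1 : ℝ) := by exact_mod_cast hω0 p.2 p.1
        linarith
    · have hadj' : ¬ G.Adj p.2 p.1 := fun hc => hadj hc.symm
      rw [if_neg hadj, if_neg hadj', hωsupp p.1 p.2 hadj]
      norm_num
  refine ⟨key h, fun _ _ _ => ?_⟩
  have hset : {x : ℝ | ∃ g : V → Fin k, Function.Surjective g ∧
        x = ∑ p ∈ (univ : Finset (V × V)).filter (fun p => p.1 < p.2 ∧ g p.1 = g p.2),
          ((ω p.1 p.2 : ℝ))} =
      {x : ℝ | ∃ g : V → Fin k, Function.Surjective g ∧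
        x = ∑ p ∈ (univ : Finset (V × V)).filter (fun p => p.1 < p.2 ∧ g p.1 = g p.2),
        (((if p.1 = p.2 then (1:ℝ) else if G.Adj p.2 p.1 then Real.sqrt ((ω p.2 p.1 : ℝ)/2) else 0) /
           (if p.1 = p.1 then (1:ℝ) else if G.Adj p.1 p.1 then Real.sqrt ((ω p.1 p.1 : ℝ)/2) else 0))^2 +
         ((if p.2 = p.1 then (1:ℝ) else if G.Adj p.1 p.2 then Real.sqrt ((ω p.1 p.2 : ℝ)/2) else 0) /
           (if p.2 = p.2 then (1:ℝ) else if G.Adj p.2 p.2 then Real.sqrt ((ω p.2 p.2 : ℝ)/2) else 0))^2)} := by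
    ext x
    constructor
    · rintro ⟨g, hg, rfl⟩; exact ⟨g, hg, key g⟩
    · rintro ⟨g, hg, rfl⟩; exact ⟨g, hg, (key g).symm⟩
  beta_reduce
  rw [show sInf {x : ℝ | ∃ g : V → Fin k, Function.Surjective g ∧
        x = ∑ p ∈ (univ : Finset (V × V)).filter (fun p => p.1 < p.2 ∧ g p.1 = g p.2),
          ((ω p.1 p.2 : ℝ))} = sInf _ from congrArg sInf hset, key h]
end

section
/- Two optimization problems whose instances are in measure-preserving bijective correspondence (instances map to instances, feasible solutions map bijectively to feasible solutions, and corresponding solutions have equal measure) have equal optimal values on corresponding instances, and any r-approximate solution maps to an r-approximate solution. In particular, Pilot Assignment and Min-τ-Partition restricted to complete graphs with symmetric nonnegative weights are approximation-equivalent with α = 1 in both directions. -/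
/-- If the feasible solutions of two minimization problems (on corresponding
instances) are in bijective, measure-preserving correspondence, then the
optimal values coincide and any `r`-approximate solution maps to an
`r`-approximate solution (AP-reduction with `α = 1` in both directions). -/
theorem stmt_11 (S₁ S₂ : Type*) (e : S₁ ≃ S₂) (m₁ : S₁ → ℝ) (m₂ : S₂ → ℝ)
    (hm : ∀ y : S₁, m₁ y = m₂ (e y)) :
    sInf (Set.range m₁) = sInf (Set.range m₂) ∧
    (∀ (r : ℝ) (y : S₁), m₁ y ≤ r * sInf (Set.range m₁) →
      m₂ (e y) ≤ r * sInf (Set.range m₂)) ∧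
    (∀ (r : ℝ) (z : S₂), m₂ z ≤ r * sInf (Set.range m₂) →
      m₁ (e.symm z) ≤ r * sInf (Set.range m₁)) := by
  have hrange : Set.range m₁ = Set.range m₂ := by
    ext x
    constructor
    · rintro ⟨y, rfl⟩; exact ⟨e y, (hm y).symm⟩
    · rintro ⟨z, rfl⟩; exact ⟨e.symm z, by rw [hm, e.apply_symm_apply]⟩
  refine ⟨by rw [hrange], ?_, ?_⟩
  · intro r y h; rw [← hrange, ← hm]; exact h
  · intro r z h; rw [hrange, hm, e.apply_symm_apply]; exact h
end
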